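/- For every n ≥ 0, the leading coefficient of P_{n+1}^(0)(·;ζ) is strictly larger than the leading coefficient of P_n^(1)(·;ζ), i.e. c_{n+1}^(0) > c_n^(1); equivalently, p̃_n := c_n^(1)/c_{n+1}^(0) satisfies 0 < p̃_n < 1. -/

import Mathlib

open MeasureTheory Polynomial

noncomputable def besselK (n : ℕ) (ζ : ℝ) : ℝ :=
  ∫ t in Set.Ioi (0 : ℝ), Real.cosh ((n : ℝ) * t) * Real.exp (-ζ * Real.cosh t)

noncomputable def Gfun (ζ : ℝ) : ℝ := besselK 2 ζ / besselK 1 ζ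

noncomputable def wgt (ℓ : ℕ) (ζ x : ℝ) : ℝ :=
  (x ^ 2 - 1) ^ ((ℓ : ℝ) - 1 / 2) * Real.exp (-ζ * x) / besselK 1 ζ

lemma aux_deg_lt (s : Polynomial ℝ) (d : ℕ) (hle : s.natDegree ≤ d) (hc : s.coeff d = 0) :
    s.natDegree < d ∨ s = 0 := by
  by_cases hs : s = 0
  · exact Or.inr hs
  · left
    refine lt_of_le_of_ne hle (fun h => ?_)
    rw [← h, Polynomial.coeff_natDegree] at hc
    exact hs (Polynomial.leadingCoeff_eq_zero.mp hc)

theorem stmt13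
    (ζ : ℝ) (hζ : 0 < ζ)
    (P0 P1 : ℕ → Polynomial ℝ) (lc0 lc1 : ℕ → ℝ)
    (hdeg0 : ∀ n, (P0 n).natDegree = n)
    (hdeg1 : ∀ n, (P1 n).natDegree = n)
    (hlc0 : ∀ n, (P0 n).leadingCoeff = lc0 n)
    (hlc1 : ∀ n, (P1 n).leadingCoeff = lc1 n)
    (hlc0pos : ∀ n, 0 < lc0 n)
    (hlc1pos : ∀ n, 0 < lc1 n)
    (horth0 : ∀ m n, (∫ x in Set.Ioi (1 : ℝ),
        (P0 m).eval x * (P0 n).eval x * wgt 0 ζ x) = if m = n then (1 : ℝ) else 0)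
    (horth1 : ∀ m n, (∫ x in Set.Ioi (1 : ℝ),
        (P1 m).eval x * (P1 n).eval x * wgt 1 ζ x) = if m = n then (1 : ℝ) else 0)
    :
    ∀ n : ℕ, lc1 n < lc0 (n + 1) ∧
      0 < lc1 n / lc0 (n + 1) ∧ lc1 n / lc0 (n + 1) < 1 := by
  -- basic measurability
  have hwm : Measurable (wgt 0 ζ) := by unfold wgt; fun_prop
  -- positivity of besselK 1 ζ
  have hK : 0 < besselK 1 ζ := by
    by_contra hneg
    push_neg at hneg
    have h1 := horth0 0 0
    simp only [if_true, if_pos rfl] at h1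
    have hle : (∫ x in Set.Ioi (1 : ℝ),
        (P0 0).eval x * (P0 0).eval x * wgt 0 ζ x) ≤ 0 := by
      apply setIntegral_nonpos measurableSet_Ioi
      intro x hx
      have ht : (0:ℝ) < x^2 - 1 := by
        have : (1:ℝ) < x := hx
        nlinarith
      have hw : wgt 0 ζ x ≤ 0 := by
        unfold wgt
        apply div_nonpos_of_nonneg_of_nonpos _ hneg
        positivity
      exact mul_nonpos_of_nonneg_of_nonpos (mul_self_nonneg _) hw
    linarith
  have hwpos : ∀ x : ℝ, x ∈ Set.Ioi (1:ℝ) → 0 < wgt 0 ζ x := by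
    intro x hx
    have hx' : (1:ℝ) < x := hx
    have ht : (0:ℝ) < x^2 - 1 := by nlinarith
    unfold wgt
    positivity
  have hw01 : ∀ x : ℝ, x ∈ Set.Ioi (1:ℝ) → wgt 1 ζ x = (x^2 - 1) * wgt 0 ζ x := by
    intro x hx
    have hx' : (1:ℝ) < x := hx
    have ht : (0:ℝ) < x^2 - 1 := by nlinarith
    simp only [wgt, Nat.cast_one, Nat.cast_zero]
    rw [show (1:ℝ) - 1/2 = (0 - 1/2) + 1 by ring, Real.rpow_add ht, Real.rpow_one]
    ring
  -- integrability of squares of P0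
  have Isq : ∀ i, Integrable (fun x => (P0 i).eval x * (P0 i).eval x * wgt 0 ζ x)
      (volume.restrict (Set.Ioi 1)) := by
    intro i
    by_contra h
    have := integral_undef h
    rw [horth0 i i] at this
    simp at this
  -- integrability of products of P0
  have Iprod : ∀ m d, Integrable (fun x => (P0 m).eval x * (P0 d).eval x * wgt 0 ζ x)
      (volume.restrict (Set.Ioi 1)) := by
    intro m d
    have hg : Integrable (fun x => ((P0 m).eval x * (P0 m).eval x * wgt 0 ζ x
        + (P0 d).eval x * (P0 d).eval x * wgt 0 ζ x) / 2) (volume.restrict (Set.Ioi 1)) :=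
      ((Isq m).add (Isq d)).div_const 2
    refine hg.mono ?_ ?_
    · exact (((P0 m).continuous_aeval.measurable.mul
        (P0 d).continuous_aeval.measurable).mul hwm).aestronglyMeasurable
    · filter_upwards [ae_restrict_mem measurableSet_Ioi] with x hx
      have hw := hwpos x hx
      set a := (P0 m).eval x
      set b := (P0 d).eval x
      rw [Real.norm_eq_abs, Real.norm_eq_abs,
        abs_of_nonneg (by nlinarith [mul_self_nonneg a, mul_self_nonneg b] :
          (0:ℝ) ≤ (a * a * wgt 0 ζ x + b * b * wgt 0 ζ x) / 2),
        abs_mul, abs_of_pos hw, abs_mul]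
      nlinarith [sq_nonneg (|a| - |b|), abs_nonneg a, abs_nonneg b, sq_abs a, sq_abs b,
        mul_pos hw hw]
  -- L1: integrability of P0 m * r * w, and orthogonality to lower-degree polynomials
  have L1 : ∀ (m k : ℕ) (r : Polynomial ℝ), r.natDegree ≤ k →
      Integrable (fun x => (P0 m).eval x * r.eval x * wgt 0 ζ x)
        (volume.restrict (Set.Ioi 1)) ∧
      (r.natDegree < m → (∫ x in Set.Ioi 1,
        (P0 m).eval x * r.eval x * wgt 0 ζ x) = 0) := by
    intro m k
    induction k using Nat.strong_induction_on with
    | _ k ih =>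
      intro r hr
      by_cases h0 : r = 0
      · subst h0
        constructor
        · simpa using (integrable_zero ℝ ℝ (volume.restrict (Set.Ioi (1:ℝ))))
        · intro _; simp
      · set d := r.natDegree with hd
        set c := r.leadingCoeff / lc0 d with hc
        set s := r - c • P0 d with hs_def
        have hPdc : (P0 d).coeff d = lc0 d := by
          have h := Polynomial.coeff_natDegree (p := P0 d)
          rw [hdeg0 d, hlc0 d] at h
          exact h
        have hsd : s.natDegree ≤ d := by
          refine le_trans (Polynomial.natDegree_sub_le _ _) ?_
          simp only [max_le_iff]
          exact ⟨le_rfl, le_trans (Polynomial.natDegree_smul_le _ _) (le_of_eq (hdeg0 d))⟩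
        have hsc : s.coeff d = 0 := by
          have hrd : r.coeff d = r.leadingCoeff := Polynomial.coeff_natDegree
          simp only [hs_def, Polynomial.coeff_sub, Polynomial.coeff_smul, hPdc, smul_eq_mul,
            hc, hrd]
          have hl0 : lc0 d ≠ 0 := (hlc0pos d).ne'
          field_simp
          simp
        -- handle s
        have hS : Integrable (fun x => (P0 m).eval x * s.eval x * wgt 0 ζ x)
            (volume.restrict (Set.Ioi 1)) ∧
            (s.natDegree < m → (∫ x in Set.Ioi 1,
              (P0 m).eval x * s.eval x * wgt 0 ζ x) = 0) := by
          rcases aux_deg_lt s d hsd hsc with hlt | hz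
          · exact ih s.natDegree (lt_of_lt_of_le hlt hr) s le_rfl
          · rw [hz]
            constructor
            · simpa using (integrable_zero ℝ ℝ (volume.restrict (Set.Ioi (1:ℝ))))
            · intro _; simp
        have hre : (fun x => (P0 m).eval x * r.eval x * wgt 0 ζ x)
            = fun x => c * ((P0 m).eval x * (P0 d).eval x * wgt 0 ζ x)
              + (P0 m).eval x * s.eval x * wgt 0 ζ x := by
          funext x
          have : s.eval x = r.eval x - c * (P0 d).eval x := by
            simp [hs_def]
          rw [this]; ring
        constructor
        · rw [hre]
          exact ((Iprod m d).const_mul c).add hS.1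
        · intro hdm
          rw [hre, integral_add (((Iprod m d).const_mul c)) hS.1, integral_const_mul,
            horth0 m d, if_neg (by omega : ¬ m = d), hS.2 (lt_of_le_of_lt hsd hdm)]
          ring
  -- L2: integrability of r^2 * w
  have L2 : ∀ (k : ℕ) (r : Polynomial ℝ), r.natDegree ≤ k →
      Integrable (fun x => r.eval x * r.eval x * wgt 0 ζ x)
        (volume.restrict (Set.Ioi 1)) := by
    intro k
    induction k using Nat.strong_induction_on with
    | _ k ih =>
      intro r hr
      by_cases h0 : r = 0
      · subst h0
        simpa using (integrable_zero ℝ ℝ (volume.restrict (Set.Ioi (1:ℝ))))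
      · set d := r.natDegree with hd
        set c := r.leadingCoeff / lc0 d with hc
        set s := r - c • P0 d with hs_def
        have hPdc : (P0 d).coeff d = lc0 d := by
          have h := Polynomial.coeff_natDegree (p := P0 d)
          rw [hdeg0 d, hlc0 d] at h
          exact h
        have hsd : s.natDegree ≤ d := by
          refine le_trans (Polynomial.natDegree_sub_le _ _) ?_
          simp only [max_le_iff]
          exact ⟨le_rfl, le_trans (Polynomial.natDegree_smul_le _ _) (le_of_eq (hdeg0 d))⟩
        have hsc : s.coeff d = 0 := by
          have hrd : r.coeff d = r.leadingCoeff := Polynomial.coeff_natDegree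
          simp only [hs_def, Polynomial.coeff_sub, Polynomial.coeff_smul, hPdc, smul_eq_mul,
            hc, hrd]
          have hl0 : lc0 d ≠ 0 := (hlc0pos d).ne'
          field_simp
          simp
        have hSS : Integrable (fun x => s.eval x * s.eval x * wgt 0 ζ x)
            (volume.restrict (Set.Ioi 1)) := by
          rcases aux_deg_lt s d hsd hsc with hlt | hz
          · exact ih s.natDegree (lt_of_lt_of_le hlt hr) s le_rfl
          · rw [hz]
            simpa using (integrable_zero ℝ ℝ (volume.restrict (Set.Ioi (1:ℝ))))
        have hPS : Integrable (fun x => (P0 d).eval x * s.eval x * wgt 0 ζ x)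
            (volume.restrict (Set.Ioi 1)) := (L1 d s.natDegree s le_rfl).1
        have hre : (fun x => r.eval x * r.eval x * wgt 0 ζ x)
            = fun x => (c * c) * ((P0 d).eval x * (P0 d).eval x * wgt 0 ζ x)
              + ((2*c) * ((P0 d).eval x * s.eval x * wgt 0 ζ x)
                + s.eval x * s.eval x * wgt 0 ζ x) := by
          funext x
          have : r.eval x = c * (P0 d).eval x + s.eval x := by
            simp [hs_def]
          rw [this]; ring
        rw [hre]
        exact ((Isq d).const_mul _).add ((hPS.const_mul _).add hSS)
  -- main argument
  intro n
  have hl1ne : lc1 n ≠ 0 := (hlc1pos n).ne'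
  have hl0ne : lc0 (n+1) ≠ 0 := (hlc0pos (n+1)).ne'
  set p : Polynomial ℝ := C (lc1 n)⁻¹ * P1 n with hp_def
  set q : Polynomial ℝ := (X - C 1) * p with hq_def
  have hP1ne : P1 n ≠ 0 := by
    intro h
    exact hl1ne (by rw [← hlc1 n, h, Polynomial.leadingCoeff_zero])
  have hpne : p ≠ 0 := by
    simp [hp_def, hP1ne, inv_eq_zero, hl1ne]
  have hpd : p.natDegree = n := by
    rw [hp_def, Polynomial.natDegree_C_mul (inv_ne_zero hl1ne), hdeg1 n]
  have hplc : p.leadingCoeff = 1 := by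
    rw [hp_def, Polynomial.leadingCoeff_mul, Polynomial.leadingCoeff_C, hlc1 n]
    field_simp
  have hXm : (X - C (1:ℝ)).Monic := Polynomial.monic_X_sub_C 1
  have hqd : q.natDegree = n + 1 := by
    rw [hq_def, Polynomial.natDegree_mul (hXm.ne_zero) hpne, hpd,
      Polynomial.natDegree_X_sub_C]
    omega
  have hqlc : q.leadingCoeff = 1 := by
    rw [hq_def, Polynomial.leadingCoeff_mul, hXm.leadingCoeff, hplc]
    ring
  set c0 : ℝ := (lc0 (n+1))⁻¹ with hc0
  set s : Polynomial ℝ := q - C c0 * P0 (n+1) with hs_def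
  have hPc : (P0 (n+1)).coeff (n+1) = lc0 (n+1) := by
    have h := Polynomial.coeff_natDegree (p := P0 (n+1))
    rw [hdeg0 (n+1), hlc0 (n+1)] at h
    exact h
  have hqc : q.coeff (n+1) = 1 := by
    have h := Polynomial.coeff_natDegree (p := q)
    rw [hqd, hqlc] at h
    exact h
  have hsd : s.natDegree ≤ n + 1 := by
    refine le_trans (Polynomial.natDegree_sub_le _ _) ?_
    simp only [max_le_iff]
    refine ⟨le_of_eq hqd, le_trans (Polynomial.natDegree_C_mul_le _ _) (le_of_eq (hdeg0 _))⟩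
  have hsc : s.coeff (n+1) = 0 := by
    simp only [hs_def, Polynomial.coeff_sub, Polynomial.coeff_C_mul, hPc, hqc, hc0]
    field_simp
    simp
  have hslt : s.natDegree < n + 1 := by
    rcases aux_deg_lt s (n+1) hsd hsc with h | h
    · exact h
    · rw [h]; simp
  -- value of B
  have hB : (∫ x in Set.Ioi (1:ℝ), p.eval x * p.eval x * wgt 1 ζ x)
      = ((lc1 n)⁻¹)^2 := by
    have : (fun x => p.eval x * p.eval x * wgt 1 ζ x)
        = fun x => ((lc1 n)⁻¹)^2 * ((P1 n).eval x * (P1 n).eval x * wgt 1 ζ x) := by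
      funext x
      simp [hp_def]
      ring
    rw [this, integral_const_mul, horth1 n n, if_pos rfl, mul_one]
  -- integrability of B's integrand
  have IB1 : Integrable (fun x => (P1 n).eval x * (P1 n).eval x * wgt 1 ζ x)
      (volume.restrict (Set.Ioi 1)) := by
    by_contra h
    have := integral_undef h
    rw [horth1 n n] at this
    simp at this
  have IB : Integrable (fun x => p.eval x * p.eval x * wgt 1 ζ x)
      (volume.restrict (Set.Ioi 1)) := by
    have : (fun x => p.eval x * p.eval x * wgt 1 ζ x)
        = fun x => ((lc1 n)⁻¹)^2 * ((P1 n).eval x * (P1 n).eval x * wgt 1 ζ x) := by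
      funext x
      simp [hp_def]
      ring
    rw [this]
    exact IB1.const_mul _
  -- integrability of A's integrand
  have IA : Integrable (fun x => q.eval x * q.eval x * wgt 0 ζ x)
      (volume.restrict (Set.Ioi 1)) := L2 q.natDegree q le_rfl
  -- lower bound for A
  have hA : c0^2 ≤ ∫ x in Set.Ioi (1:ℝ), q.eval x * q.eval x * wgt 0 ζ x := by
    have hqe : (fun x => q.eval x * q.eval x * wgt 0 ζ x)
        = fun x => c0^2 * ((P0 (n+1)).eval x * (P0 (n+1)).eval x * wgt 0 ζ x)
          + ((2*c0) * ((P0 (n+1)).eval x * s.eval x * wgt 0 ζ x)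
            + s.eval x * s.eval x * wgt 0 ζ x) := by
      funext x
      have : q.eval x = c0 * (P0 (n+1)).eval x + s.eval x := by
        simp [hs_def]
      rw [this]; ring
    have I1 : Integrable (fun x => c0^2 * ((P0 (n+1)).eval x * (P0 (n+1)).eval x * wgt 0 ζ x))
        (volume.restrict (Set.Ioi 1)) := (Isq (n+1)).const_mul _
    have I2 : Integrable (fun x => (P0 (n+1)).eval x * s.eval x * wgt 0 ζ x)
        (volume.restrict (Set.Ioi 1)) := (L1 (n+1) s.natDegree s le_rfl).1
    have I3 : Integrable (fun x => s.eval x * s.eval x * wgt 0 ζ x)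
        (volume.restrict (Set.Ioi 1)) := L2 s.natDegree s le_rfl
    have hsint : (0:ℝ) ≤ ∫ x in Set.Ioi (1:ℝ), s.eval x * s.eval x * wgt 0 ζ x := by
      apply setIntegral_nonneg measurableSet_Ioi
      intro x hx
      exact mul_nonneg (mul_self_nonneg _) (hwpos x hx).le
    have I2' : Integrable (fun x => (2*c0) * ((P0 (n+1)).eval x * s.eval x * wgt 0 ζ x))
        (volume.restrict (Set.Ioi 1)) := I2.const_mul _
    have I23 : Integrable (fun x => (2*c0) * ((P0 (n+1)).eval x * s.eval x * wgt 0 ζ x)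
        + s.eval x * s.eval x * wgt 0 ζ x) (volume.restrict (Set.Ioi 1)) := I2'.add I3
    rw [hqe, integral_add I1 I23, integral_add I2' I3,
      integral_const_mul, integral_const_mul, horth0 (n+1) (n+1), if_pos rfl,
      (L1 (n+1) s.natDegree s le_rfl).2 hslt]
    simp only [mul_one, mul_zero, zero_add]
    linarith
  -- strict comparison A < B
  have hAB : (∫ x in Set.Ioi (1:ℝ), q.eval x * q.eval x * wgt 0 ζ x)
      < ∫ x in Set.Ioi (1:ℝ), p.eval x * p.eval x * wgt 1 ζ x := by
    rw [← sub_pos, ← integral_sub IB IA]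
    set g : ℝ → ℝ := fun x => p.eval x * p.eval x * wgt 1 ζ x
      - q.eval x * q.eval x * wgt 0 ζ x with hg_def
    have hqev : ∀ x : ℝ, q.eval x = (x - 1) * p.eval x := by
      intro x; simp [hq_def]
    have hgval : ∀ x ∈ Set.Ioi (1:ℝ),
        g x = 2 * (x - 1) * (p.eval x * p.eval x) * wgt 0 ζ x := by
      intro x hx
      simp only [hg_def, hqev x, hw01 x hx]
      ring
    have hgnn : 0 ≤ᵐ[volume.restrict (Set.Ioi 1)] g := by
      filter_upwards [ae_restrict_mem measurableSet_Ioi] with x hx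
      rw [hgval x hx]
      have hx' : (1:ℝ) < x := hx
      exact mul_nonneg (mul_nonneg (by nlinarith : (0:ℝ) ≤ 2 * (x - 1))
        (mul_self_nonneg _)) (hwpos x hx).le
    have hgint : Integrable g (volume.restrict (Set.Ioi 1)) := IB.sub IA
    rw [integral_pos_iff_support_of_nonneg_ae hgnn hgint]
    have hroots : (volume : Measure ℝ) {x : ℝ | p.eval x = 0} = 0 := by
      apply Set.Finite.measure_zero
      exact Polynomial.finite_setOf_isRoot hpne
    set T : Set ℝ := Set.Ioi (1:ℝ) \ {x : ℝ | p.eval x = 0} with hT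
    have hTsub : T ⊆ Function.support g := by
      intro x hx
      obtain ⟨hx1, hx2⟩ := hx
      have hx' : (1:ℝ) < x := hx1
      have hpnz : p.eval x ≠ 0 := hx2
      rw [Function.mem_support, hgval x hx1]
      have hw := hwpos x hx1
      have h2 : (0:ℝ) < 2 * (x - 1) := by nlinarith
      exact ne_of_gt (mul_pos (mul_pos h2 (mul_self_pos.mpr hpnz)) hw)
    have hTm : volume.restrict (Set.Ioi 1) T = volume (Set.Ioi (1:ℝ)) := by
      rw [Measure.restrict_apply' measurableSet_Ioi]
      have : T ∩ Set.Ioi 1 = T := Set.inter_eq_left.mpr Set.diff_subset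
      rw [this, measure_diff_null hroots]
    have hpos : 0 < volume.restrict (Set.Ioi 1) T := by
      rw [hTm, Real.volume_Ioi]
      simp
    exact lt_of_lt_of_le hpos (measure_mono hTsub)
  -- conclude
  have hkey : ((lc0 (n+1))⁻¹)^2 < ((lc1 n)⁻¹)^2 := by
    calc ((lc0 (n+1))⁻¹)^2 = c0^2 := by rw [hc0]
    _ ≤ _ := hA
    _ < _ := hAB
    _ = ((lc1 n)⁻¹)^2 := hB
  have ha := hlc0pos (n+1)
  have hb := hlc1pos n
  have hlt : lc1 n < lc0 (n+1) := by
    have h2 : (lc1 n)^2 < (lc0 (n+1))^2 := by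
      rw [inv_pow, inv_pow] at hkey
      exact (inv_lt_inv₀ (by positivity) (by positivity)).mp hkey
    nlinarith
  exact ⟨hlt, div_pos hb ha, (div_lt_one ha).mpr hlt⟩
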